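/- Maximally entangled two-qubit states possess only local magic: if v ∈ ℂ² ⊗ ℂ² is a unit vector with Tr_B(v vᴴ) = (1/2)·I (the maximally mixed single-qubit state), then there exist unitaries U_A, U_B ∈ U(2) such that M₂( (U_A ⊗ U_B) v vᴴ (U_A ⊗ U_B)ᴴ ) = 0; equivalently, the non-local magic M₂ᴺᴸ(v vᴴ) = 0. -/

import Mathlib

noncomputable section
open Matrix Kronecker

/-- The four single-qubit Pauli matrices I, X, Y, Z. -/
def pauli : Fin 4 → Matrix (Fin 2) (Fin 2) ℂ :=
  ![1, !![0, 1; 1, 0], !![0, -Complex.I; Complex.I, 0], !![1, 0; 0, -1]]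

/-- Two-qubit Pauli strings σ₁ ⊗ σ₂. -/
def pauli2 (a : Fin 4 × Fin 4) : Matrix (Fin 2 × Fin 2) (Fin 2 × Fin 2) ℂ :=
  pauli a.1 ⊗ₖ pauli a.2

/-- Rank-one density matrix v vᴴ. -/
def dm {ι : Type*} (v : ι → ℂ) : Matrix ι ι ℂ := Matrix.vecMulVec v (star v)

/-- Stabilizer 2-Rényi entropy of a two-qubit state. -/
def M2two (ψ : Matrix (Fin 2 × Fin 2) (Fin 2 × Fin 2) ℂ) : ℝ :=
  - Real.logb 2 ((1 / 4) * ∑ a : Fin 4 × Fin 4, ‖(pauli2 a * ψ).trace‖ ^ 4)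

/-- Non-local magic: infimum of stabilizer entropy over local unitary orbits. -/
def M2NL (ψ : Matrix (Fin 2 × Fin 2) (Fin 2 × Fin 2) ℂ) : ℝ :=
  ⨅ U : Matrix.unitaryGroup (Fin 2) ℂ × Matrix.unitaryGroup (Fin 2) ℂ,
    M2two (((U.1 : Matrix (Fin 2) (Fin 2) ℂ) ⊗ₖ (U.2 : Matrix (Fin 2) (Fin 2) ℂ)) * ψ *
      ((U.1 : Matrix (Fin 2) (Fin 2) ℂ) ⊗ₖ (U.2 : Matrix (Fin 2) (Fin 2) ℂ))ᴴ)

/-- Partial trace over the second qubit. -/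
def ptraceB (M : Matrix (Fin 2 × Fin 2) (Fin 2 × Fin 2) ℂ) : Matrix (Fin 2) (Fin 2) ℂ :=
  Matrix.of fun i i' => ∑ j : Fin 2, M (i, j) (i', j)

lemma pauli_unitary (i : Fin 4) : (pauli i)ᴴ * pauli i = 1 := by
  fin_cases i <;>
  · ext a b
    fin_cases a <;> fin_cases b <;>
      simp [pauli, Matrix.mul_apply, Fin.sum_univ_succ, Matrix.conjTranspose_apply,
        Matrix.one_apply]

lemma kron_conjTranspose {l m n p : Type*} (A : Matrix l m ℂ) (B : Matrix n p ℂ) :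
    (A ⊗ₖ B)ᴴ = Aᴴ ⊗ₖ Bᴴ := by
  ext ⟨i, j⟩ ⟨k, l⟩
  simp [Matrix.conjTranspose_apply, mul_comm]

lemma pauli2_unitary (a : Fin 4 × Fin 4) : (pauli2 a)ᴴ * pauli2 a = 1 := by
  rw [pauli2, kron_conjTranspose, ← Matrix.mul_kronecker_mul, pauli_unitary, pauli_unitary,
    Matrix.one_kronecker_one]

lemma pauli_orth (x y x' y' : Fin 2) :
    ∑ i : Fin 4, pauli i x y * (starRingEnd ℂ) (pauli i x' y') =
      if x = x' ∧ y = y' then 2 else 0 := by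
  fin_cases x <;> fin_cases y <;> fin_cases x' <;> fin_cases y' <;>
    simp [pauli, Fin.sum_univ_succ, Matrix.one_apply] <;> norm_num

lemma pauli2_orth (x y x' y' : Fin 2 × Fin 2) :
    ∑ a : Fin 4 × Fin 4, pauli2 a x y * (starRingEnd ℂ) (pauli2 a x' y') =
      if x = x' ∧ y = y' then 4 else 0 := by
  obtain ⟨x1, x2⟩ := x; obtain ⟨y1, y2⟩ := y; obtain ⟨x1', x2'⟩ := x'; obtain ⟨y1', y2'⟩ := y'
  rw [Fintype.sum_prod_type]
  have : ∀ a1 a2 : Fin 4, pauli2 (a1, a2) (x1, x2) (y1, y2) *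
      (starRingEnd ℂ) (pauli2 (a1, a2) (x1', x2') (y1', y2')) =
      (pauli a1 x1 y1 * (starRingEnd ℂ) (pauli a1 x1' y1')) *
      (pauli a2 x2 y2 * (starRingEnd ℂ) (pauli a2 x2' y2')) := by
    intro a1 a2
    simp only [pauli2, Matrix.kroneckerMap_apply, _root_.map_mul]
    ring
  simp_rw [this]
  rw [← Finset.sum_mul_sum, pauli_orth, pauli_orth]
  by_cases h1 : x1 = x1' <;> by_cases h2 : y1 = y1' <;> by_cases h3 : x2 = x2' <;>
    by_cases h4 : y2 = y2' <;> simp [h1, h2, h3, h4, Prod.ext_iff] <;> norm_num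

/-- trace of P * dm w as a dot product -/
lemma trace_dm {ι : Type*} [Fintype ι] (A : Matrix ι ι ℂ) (w : ι → ℂ) :
    (A * dm w).trace = ∑ p : ι × ι, A p.1 p.2 * (w p.2 * (starRingEnd ℂ) (w p.1)) := by
  simp [Matrix.trace, Matrix.mul_apply, Matrix.diag, dm, Matrix.vecMulVec_apply,
    Fintype.sum_prod_type, Pi.star_apply, RCLike.star_def]



lemma dm_conj {ι : Type*} [Fintype ι] (M : Matrix ι ι ℂ) (w : ι → ℂ) :
    M * dm w * Mᴴ = dm (M *ᵥ w) := by
  ext i j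
  simp only [dm, Matrix.mul_apply, Matrix.vecMulVec_apply, Matrix.conjTranspose_apply,
    Matrix.mulVec, dotProduct, Pi.star_apply, Finset.sum_mul, Finset.mul_sum,
    star_sum, star_mul']
  refine Finset.sum_congr rfl fun k _ => ?_
  refine Finset.sum_congr rfl fun l _ => ?_
  ring

lemma norm_pres {ι : Type*} [Fintype ι] [DecidableEq ι] (M : Matrix ι ι ℂ)
    (hM : Mᴴ * M = 1) (w : ι → ℂ) :
    ∑ i, Complex.normSq ((M *ᵥ w) i) = ∑ i, Complex.normSq (w i) := by
  have key : star (M *ᵥ w) ⬝ᵥ (M *ᵥ w) = star w ⬝ᵥ w := by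
    rw [Matrix.star_mulVec, dotProduct_mulVec, Matrix.vecMul_vecMul, hM,
      Matrix.vecMul_one]
  have h1 : ∀ u : ι → ℂ, star u ⬝ᵥ u = (↑(∑ i, Complex.normSq (u i)) : ℂ) := by
    intro u
    simp [dotProduct, Complex.normSq_eq_conj_mul_self]
  rw [h1, h1] at key
  exact_mod_cast key

lemma key_bound (w : Fin 2 × Fin 2 → ℂ) (hw : ∑ i, Complex.normSq (w i) = 1) :
    ∑ a : Fin 4 × Fin 4, ‖(pauli2 a * dm w).trace‖ ^ 4 ≤ 4 := by
  set T : Fin 4 × Fin 4 → ℂ := fun a => (pauli2 a * dm w).trace with hT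
  have hTdef : ∀ a, T a = (pauli2 a * dm w).trace := fun a => rfl
  -- each |T a| ≤ 1
  have habs : ∀ a, ‖T a‖ ^ 2 ≤ 1 := by
    intro a
    have hu : ∑ i, Complex.normSq ((pauli2 a *ᵥ w) i) = 1 := by
      rw [norm_pres _ (pauli2_unitary a) w]; exact hw
    have hTa : T a = ∑ x, (starRingEnd ℂ) (w x) * (pauli2 a *ᵥ w) x := by
      rw [hTdef, trace_dm, Fintype.sum_prod_type]
      simp only [Matrix.mulVec, dotProduct, Finset.mul_sum]
      refine Finset.sum_congr rfl fun x _ => Finset.sum_congr rfl fun y _ => by ring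
    have h1 : ‖T a‖ ≤ ∑ x, ‖w x‖ * ‖(pauli2 a *ᵥ w) x‖ := by
      rw [hTa]
      refine (norm_sum_le _ _).trans_eq ?_
      refine Finset.sum_congr rfl fun x _ => ?_
      rw [norm_mul, Complex.norm_conj]
    have h2 : (∑ x, ‖w x‖ * ‖(pauli2 a *ᵥ w) x‖) ^ 2 ≤
        (∑ x, ‖w x‖ ^ 2) * (∑ x, ‖(pauli2 a *ᵥ w) x‖ ^ 2) :=
      Finset.sum_mul_sq_le_sq_mul_sq _ _ _
    have h3 : (∑ x, ‖w x‖ ^ 2) = 1 := by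
      simp_rw [Complex.sq_norm]; exact hw
    have h4 : (∑ x, ‖(pauli2 a *ᵥ w) x‖ ^ 2) = 1 := by
      simp_rw [Complex.sq_norm]; exact hu
    calc ‖T a‖ ^ 2 ≤ (∑ x, ‖w x‖ * ‖(pauli2 a *ᵥ w) x‖) ^ 2 := by
          apply pow_le_pow_left₀ (norm_nonneg _) h1
      _ ≤ 1 := by rw [h3, h4] at h2; simpa using h2
  -- sum of |T a|^2 = 4
  have hsum2 : ∑ a : Fin 4 × Fin 4, ‖T a‖ ^ 2 = 4 := by
    have key : ∑ a : Fin 4 × Fin 4, T a * (starRingEnd ℂ) (T a) = 4 := by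
      have expand : ∀ a, T a * (starRingEnd ℂ) (T a) =
          ∑ p : (Fin 2 × Fin 2) × (Fin 2 × Fin 2), ∑ q : (Fin 2 × Fin 2) × (Fin 2 × Fin 2),
            (pauli2 a p.1 p.2 * (starRingEnd ℂ) (pauli2 a q.1 q.2)) *
              ((w p.2 * (starRingEnd ℂ) (w p.1)) *
                (starRingEnd ℂ) (w q.2 * (starRingEnd ℂ) (w q.1))) := by
        intro a
        rw [hTdef, trace_dm, map_sum, Finset.sum_mul_sum]
        refine Finset.sum_congr rfl fun p _ => Finset.sum_congr rfl fun q _ => ?_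
        rw [_root_.map_mul]
        ring
      simp_rw [expand]
      rw [Finset.sum_comm]
      have swap2 : ∀ p : (Fin 2 × Fin 2) × (Fin 2 × Fin 2),
          ∑ a : Fin 4 × Fin 4, ∑ q : (Fin 2 × Fin 2) × (Fin 2 × Fin 2),
            (pauli2 a p.1 p.2 * (starRingEnd ℂ) (pauli2 a q.1 q.2)) *
              ((w p.2 * (starRingEnd ℂ) (w p.1)) *
                (starRingEnd ℂ) (w q.2 * (starRingEnd ℂ) (w q.1)))
          = 4 * (Complex.normSq (w p.2) * Complex.normSq (w p.1)) := by
        intro p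
        rw [Finset.sum_comm]
        have inner : ∀ q : (Fin 2 × Fin 2) × (Fin 2 × Fin 2),
            ∑ a : Fin 4 × Fin 4,
              (pauli2 a p.1 p.2 * (starRingEnd ℂ) (pauli2 a q.1 q.2)) *
                ((w p.2 * (starRingEnd ℂ) (w p.1)) *
                  (starRingEnd ℂ) (w q.2 * (starRingEnd ℂ) (w q.1)))
            = (if p = q then (4 : ℂ) else 0) * ((w p.2 * (starRingEnd ℂ) (w p.1)) *
                (starRingEnd ℂ) (w q.2 * (starRingEnd ℂ) (w q.1))) := by
          intro q
          rw [← Finset.sum_mul, pauli2_orth]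
          simp [Prod.ext_iff]
        simp_rw [inner, ite_mul, zero_mul, Finset.sum_ite_eq, Finset.mem_univ, if_true]
        simp only [_root_.map_mul, Complex.conj_conj]
        rw [show w p.2 * (starRingEnd ℂ) (w p.1) * ((starRingEnd ℂ) (w p.2) * w p.1)
            = (w p.2 * (starRingEnd ℂ) (w p.2)) * (w p.1 * (starRingEnd ℂ) (w p.1)) from by ring,
          Complex.mul_conj, Complex.mul_conj]
      simp_rw [swap2]
      rw [← Finset.mul_sum]
      have : ∑ p : (Fin 2 × Fin 2) × (Fin 2 × Fin 2),
          (Complex.normSq (w p.2) * Complex.normSq (w p.1) : ℂ)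
          = ((∑ i, Complex.normSq (w i) : ℝ) : ℂ) * ((∑ i, Complex.normSq (w i) : ℝ) : ℂ) := by
        rw [Fintype.sum_prod_type]
        push_cast
        rw [Finset.sum_comm, ← Finset.sum_mul_sum]
      rw [this, hw]
      norm_num
    have key2 : ∑ a : Fin 4 × Fin 4, (Complex.normSq (T a) : ℂ) = 4 := by
      simpa [Complex.mul_conj] using key
    have key3 : (↑(∑ a : Fin 4 × Fin 4, Complex.normSq (T a)) : ℂ) = 4 := by
      push_cast
      exact key2
    have key4 : ∑ a : Fin 4 × Fin 4, Complex.normSq (T a) = 4 := by exact_mod_cast key3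
    simp_rw [Complex.sq_norm]
    exact key4
  calc ∑ a : Fin 4 × Fin 4, ‖T a‖ ^ 4
      ≤ ∑ a : Fin 4 × Fin 4, ‖T a‖ ^ 2 := by
        refine Finset.sum_le_sum fun a _ => ?_
        have : ‖T a‖ ^ 4 = (‖T a‖ ^ 2) ^ 2 := by ring
        rw [this]
        nlinarith [habs a, sq_nonneg (‖T a‖), norm_nonneg (T a)]
    _ = 4 := hsum2

def bell : Fin 2 × Fin 2 → ℂ := fun p => if p.1 = p.2 then ((Real.sqrt 2)⁻¹ : ℝ) else 0

lemma dm_bell : dm bell = Matrix.of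
    (fun p q : Fin 2 × Fin 2 => if p.1 = p.2 ∧ q.1 = q.2 then (1/2 : ℂ) else 0) := by
  have hr : ((((Real.sqrt 2)⁻¹ : ℝ)) : ℂ) * ((((Real.sqrt 2)⁻¹ : ℝ)) : ℂ) = 1/2 := by
    rw [← Complex.ofReal_mul, ← mul_inv, Real.mul_self_sqrt (by norm_num : (0:ℝ) ≤ 2)]
    norm_num
  ext p q
  simp only [dm, Matrix.vecMulVec_apply, bell, Pi.star_apply, Matrix.of_apply]
  split_ifs <;> simp_all [Complex.conj_ofReal] <;> exact hr

lemma bell_M2 : ∑ a : Fin 4 × Fin 4, ‖(pauli2 a * dm bell).trace‖ ^ 4 = 4 := by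
  rw [dm_bell]
  simp [Matrix.trace, Matrix.mul_apply, Matrix.diag, Fintype.sum_prod_type, pauli2, pauli,
    Fin.sum_univ_succ, Matrix.one_apply]
  norm_num [Complex.norm_def, Complex.normSq]

/-- M2two of a pure unit state is nonnegative. -/
lemma M2two_nonneg (w : Fin 2 × Fin 2 → ℂ) (hw : ∑ i, Complex.normSq (w i) = 1) :
    0 ≤ M2two (dm w) := by
  rw [M2two, neg_nonneg]
  refine Real.logb_nonpos one_lt_two (by positivity) ?_
  have := key_bound w hw
  linarith

theorem maximally_entangled_has_only_local_magic
    (v : Fin 2 × Fin 2 → ℂ) (hv : ∑ i, Complex.normSq (v i) = 1)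
    (hmax : ptraceB (dm v) = ((1 / 2 : ℂ)) • (1 : Matrix (Fin 2) (Fin 2) ℂ)) :
    (∃ UA UB : Matrix (Fin 2) (Fin 2) ℂ,
        UA ∈ Matrix.unitaryGroup (Fin 2) ℂ ∧ UB ∈ Matrix.unitaryGroup (Fin 2) ℂ ∧
        M2two ((UA ⊗ₖ UB) * dm v * (UA ⊗ₖ UB)ᴴ) = 0) ∧
      M2NL (dm v) = 0 := by
  -- the 2×2 matrix of amplitudes
  set V : Matrix (Fin 2) (Fin 2) ℂ := Matrix.of (fun i j => v (i, j)) with hV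
  set s : ℂ := ((Real.sqrt 2 : ℝ) : ℂ) with hs
  have hs2 : s * s = 2 := by
    rw [hs, ← Complex.ofReal_mul, Real.mul_self_sqrt (by norm_num : (0:ℝ) ≤ 2)]
    norm_num
  have hVV : V * Vᴴ = (1/2 : ℂ) • 1 := by
    rw [← hmax]
    ext i j
    simp [hV, ptraceB, dm, Matrix.mul_apply, Matrix.vecMulVec_apply,
      Matrix.conjTranspose_apply]
  set UA : Matrix (Fin 2) (Fin 2) ℂ := s • Vᴴ with hUA
  have hUAH : UAᴴ = s • V := by
    rw [hUA, Matrix.conjTranspose_smul, Matrix.conjTranspose_conjTranspose, hs]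
    simp [Complex.conj_ofReal]
  have h2 : UAᴴ * UA = 1 := by
    rw [hUAH, hUA, Matrix.smul_mul, Matrix.mul_smul, smul_smul, hs2, hVV, smul_smul]
    norm_num
  have h1 : UA * UAᴴ = 1 := mul_eq_one_comm.mp h2
  have hUAmem : UA ∈ Matrix.unitaryGroup (Fin 2) ℂ := by
    rw [Matrix.mem_unitaryGroup_iff, Matrix.star_eq_conjTranspose]
    exact h1
  have hVHV : Vᴴ * V = (1/2 : ℂ) • 1 := by
    have e : (2 : ℂ) • (Vᴴ * V) = 1 := by
      rw [← h1, hUA, hUAH, Matrix.smul_mul, Matrix.mul_smul, smul_smul, hs2]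
    calc Vᴴ * V = (2⁻¹ : ℂ) • ((2 : ℂ) • (Vᴴ * V)) := by rw [smul_smul]; norm_num
      _ = (1/2 : ℂ) • 1 := by rw [e]; norm_num
  -- entrywise form of hVHV
  have hE : ∀ i j : Fin 2, ∑ k : Fin 2, (starRingEnd ℂ) (v (k, i)) * v (k, j) =
      if i = j then (1/2 : ℂ) else 0 := by
    intro i j
    have := congrFun (congrFun hVHV i) j
    simpa [Matrix.mul_apply, Matrix.conjTranspose_apply, hV, Matrix.one_apply,
      Matrix.smul_apply, mul_comm] using this
  -- the local rotation sends v to the Bell state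
  have hw : (UA ⊗ₖ (1 : Matrix (Fin 2) (Fin 2) ℂ)) *ᵥ v = bell := by
    funext p
    obtain ⟨i, j⟩ := p
    have expand : ((UA ⊗ₖ (1 : Matrix (Fin 2) (Fin 2) ℂ)) *ᵥ v) (i, j) =
        ∑ k : Fin 2, UA i k * v (k, j) := by
      simp only [Matrix.mulVec, dotProduct, Fintype.sum_prod_type,
        Matrix.kroneckerMap_apply, Matrix.one_apply]
      refine Finset.sum_congr rfl fun k _ => ?_
      simp [Finset.sum_ite_eq', mul_ite]
    rw [expand]
    have : ∀ k : Fin 2, UA i k * v (k, j) = s * ((starRingEnd ℂ) (v (k, i)) * v (k, j)) := by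
      intro k
      rw [hUA]
      simp [Matrix.conjTranspose_apply, hV]
      ring
    simp_rw [this, ← Finset.mul_sum, hE i j, bell]
    have hs2' : ((Real.sqrt 2 : ℝ) : ℂ) * ((Real.sqrt 2 : ℝ) : ℂ) = 2 := by
      rw [← Complex.ofReal_mul, Real.mul_self_sqrt (by norm_num : (0:ℝ) ≤ 2)]
      norm_num
    split_ifs with h
    · have hne : ((Real.sqrt 2 : ℝ) : ℂ) ≠ 0 := by
        simp only [ne_eq, Complex.ofReal_eq_zero]
        positivity
      rw [hs, Complex.ofReal_inv, inv_eq_one_div, eq_div_iff hne]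
      linear_combination (1/2 : ℂ) * hs2'
    · simp
  -- conjugating dm v gives the Bell density matrix
  have hconj : (UA ⊗ₖ (1 : Matrix (Fin 2) (Fin 2) ℂ)) * dm v *
      (UA ⊗ₖ (1 : Matrix (Fin 2) (Fin 2) ℂ))ᴴ = dm bell := by
    rw [dm_conj, hw]
  have hbell0 : M2two (dm bell) = 0 := by
    rw [M2two, bell_M2]
    norm_num
  have hval : M2two ((UA ⊗ₖ (1 : Matrix (Fin 2) (Fin 2) ℂ)) * dm v *
      (UA ⊗ₖ (1 : Matrix (Fin 2) (Fin 2) ℂ))ᴴ) = 0 := by rw [hconj]; exact hbell0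
  have hone : (1 : Matrix (Fin 2) (Fin 2) ℂ) ∈ Matrix.unitaryGroup (Fin 2) ℂ :=
    one_mem _
  -- nonnegativity on the orbit
  have hnn : ∀ U : Matrix.unitaryGroup (Fin 2) ℂ × Matrix.unitaryGroup (Fin 2) ℂ,
      0 ≤ M2two (((U.1 : Matrix (Fin 2) (Fin 2) ℂ) ⊗ₖ (U.2 : Matrix (Fin 2) (Fin 2) ℂ)) * dm v *
        ((U.1 : Matrix (Fin 2) (Fin 2) ℂ) ⊗ₖ (U.2 : Matrix (Fin 2) (Fin 2) ℂ))ᴴ) := by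
    intro U
    have hU1 : ((U.1 : Matrix (Fin 2) (Fin 2) ℂ))ᴴ * (U.1 : Matrix (Fin 2) (Fin 2) ℂ) = 1 := by
      rw [← Matrix.star_eq_conjTranspose]
      exact (Matrix.mem_unitaryGroup_iff'.mp U.1.2)
    have hU2 : ((U.2 : Matrix (Fin 2) (Fin 2) ℂ))ᴴ * (U.2 : Matrix (Fin 2) (Fin 2) ℂ) = 1 := by
      rw [← Matrix.star_eq_conjTranspose]
      exact (Matrix.mem_unitaryGroup_iff'.mp U.2.2)
    have hUk : ((U.1 : Matrix (Fin 2) (Fin 2) ℂ) ⊗ₖ (U.2 : Matrix (Fin 2) (Fin 2) ℂ))ᴴ *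
        ((U.1 : Matrix (Fin 2) (Fin 2) ℂ) ⊗ₖ (U.2 : Matrix (Fin 2) (Fin 2) ℂ)) = 1 := by
      rw [kron_conjTranspose, ← Matrix.mul_kronecker_mul, hU1, hU2, Matrix.one_kronecker_one]
    rw [dm_conj]
    exact M2two_nonneg _ (by rw [norm_pres _ hUk v]; exact hv)
  refine ⟨⟨UA, 1, hUAmem, hone, hval⟩, ?_⟩
  refine le_antisymm ?_ (le_ciInf hnn)
  have hb : BddBelow (Set.range fun U : Matrix.unitaryGroup (Fin 2) ℂ ×
      Matrix.unitaryGroup (Fin 2) ℂ =>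
      M2two (((U.1 : Matrix (Fin 2) (Fin 2) ℂ) ⊗ₖ (U.2 : Matrix (Fin 2) (Fin 2) ℂ)) * dm v *
        ((U.1 : Matrix (Fin 2) (Fin 2) ℂ) ⊗ₖ (U.2 : Matrix (Fin 2) (Fin 2) ℂ))ᴴ)) := by
    refine ⟨0, fun x hx => ?_⟩
    obtain ⟨U, rfl⟩ := hx
    exact hnn U
  have := ciInf_le hb (⟨⟨UA, hUAmem⟩, ⟨1, hone⟩⟩ :
    Matrix.unitaryGroup (Fin 2) ℂ × Matrix.unitaryGroup (Fin 2) ℂ)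
  rw [M2NL]
  exact this.trans_eq hval
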